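/- Let G=(V,E) be a finite simple undirected graph, u,v adjacent, n = |N(u)∩N(v)|. If ⌈n/2⌉ + 1 > (1/2)·max(deg(u),deg(v)), then for every cut (S,S̄) with u ∈ S and v ∈ S̄, there exists a cut obtained by moving either u or v across the cut that has strictly fewer cross edges. (Hence {u,v} crosses no cut minimizing the number of cross edges subject to the cut being nontrivial, i.e., {u,v} is not a cross-cutting edge when minimum cuts are determined by cross-edge count.) -/

import Mathlib

open Finset

variable {V : Type*}

/-- Number of edges crossing the cut `(S, Sᶜ)`. -/
def cutSize [Fintype V] [DecidableEq V] (G : SimpleGraph V) [DecidableRel G.Adj]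
    (S : Finset V) : ℕ :=
  (Finset.univ.filter (fun p : V × V => G.Adj p.1 p.2 ∧ p.1 ∈ S ∧ p.2 ∉ S)).card

lemma cut_erase [Fintype V] [DecidableEq V] (G : SimpleGraph V) [DecidableRel G.Adj]
    (u : V) (S : Finset V) (hu : u ∈ S) :
    cutSize G (S.erase u) + (G.neighborFinset u \ S).card
      = cutSize G S + (G.neighborFinset u ∩ S).card := by
  classical
  unfold cutSize
  have hB : (G.neighborFinset u \ S).card = (({u} : Finset V) ×ˢ (G.neighborFinset u \ S)).card := by
    rw [Finset.card_product, Finset.card_singleton, one_mul]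
  have hC : (G.neighborFinset u ∩ S).card = ((G.neighborFinset u ∩ S) ×ˢ ({u} : Finset V)).card := by
    rw [Finset.card_product, Finset.card_singleton, mul_one]
  rw [hB, hC, ← Finset.card_union_of_disjoint, ← Finset.card_union_of_disjoint]
  · congr 1
    ext ⟨x, y⟩
    simp only [Finset.mem_union, Finset.mem_filter, Finset.mem_univ, true_and,
      Finset.mem_product, Finset.mem_singleton, Finset.mem_sdiff, Finset.mem_inter,
      Finset.mem_erase, SimpleGraph.mem_neighborFinset]
    constructor
    · rintro (⟨hadj, ⟨hxu, hxS⟩, hy⟩ | ⟨hx, hyN, hyS⟩)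
      · by_cases hyu : y ∈ S
        · have hyu' : y = u := by
            by_contra h
            exact hy ⟨h, hyu⟩
          subst hyu'
          exact Or.inr ⟨⟨G.adj_symm hadj, hxS⟩, rfl⟩
        · exact Or.inl ⟨hadj, hxS, fun h => hyu h⟩
      · subst hx
        exact Or.inl ⟨hyN, hu, hyS⟩
    · rintro (⟨hadj, hxS, hyS⟩ | ⟨⟨hadj, hxS⟩, hy⟩)
      · by_cases hxu : x = u
        · subst hxu
          exact Or.inr ⟨rfl, hadj, hyS⟩
        · exact Or.inl ⟨hadj, ⟨hxu, hxS⟩, fun h => hyS h.2⟩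
      · subst hy
        exact Or.inl ⟨G.adj_symm hadj, ⟨hadj.ne', hxS⟩, fun h => h.1 rfl⟩
  · -- disjoint : filter S  and  (N(u)∩S) ×ˢ {u}
    rw [Finset.disjoint_left]
    rintro ⟨x, y⟩ h h'
    simp only [Finset.mem_filter, Finset.mem_univ, true_and] at h
    simp only [Finset.mem_product, Finset.mem_singleton] at h'
    exact h.2.2 (h'.2 ▸ hu)
  · -- disjoint : filter (erase)  and  {u} ×ˢ (N(u)\S)
    rw [Finset.disjoint_left]
    rintro ⟨x, y⟩ h h'
    simp only [Finset.mem_filter, Finset.mem_univ, true_and] at h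
    simp only [Finset.mem_product, Finset.mem_singleton] at h'
    exact (Finset.mem_erase.mp h.2.1).1 h'.1

lemma cut_insert [Fintype V] [DecidableEq V] (G : SimpleGraph V) [DecidableRel G.Adj]
    (v : V) (S : Finset V) (hv : v ∉ S) :
    cutSize G (insert v S) + (G.neighborFinset v ∩ S).card
      = cutSize G S + (G.neighborFinset v \ S).card := by
  classical
  unfold cutSize
  have hC : (G.neighborFinset v ∩ S).card = ((G.neighborFinset v ∩ S) ×ˢ ({v} : Finset V)).card := by
    rw [Finset.card_product, Finset.card_singleton, mul_one]
  have hB : (G.neighborFinset v \ S).card = (({v} : Finset V) ×ˢ (G.neighborFinset v \ S)).card := by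
    rw [Finset.card_product, Finset.card_singleton, one_mul]
  rw [hC, hB, ← Finset.card_union_of_disjoint, ← Finset.card_union_of_disjoint]
  · congr 1
    ext ⟨x, y⟩
    simp only [Finset.mem_union, Finset.mem_filter, Finset.mem_univ, true_and,
      Finset.mem_product, Finset.mem_singleton, Finset.mem_sdiff, Finset.mem_inter,
      Finset.mem_insert]
    simp only [SimpleGraph.mem_neighborFinset]
    constructor
    · rintro (⟨hadj, hx, hy⟩ | ⟨⟨hadj, hxS⟩, hy⟩)
      · rcases hx with hx | hx
        · subst hx
          exact Or.inr ⟨rfl, hadj, fun h => hy (Or.inr h)⟩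
        · exact Or.inl ⟨hadj, hx, fun h => hy (Or.inr h)⟩
      · subst hy
        exact Or.inl ⟨G.adj_symm hadj, hxS, hv⟩
    · rintro (⟨hadj, hx, hy⟩ | ⟨hx, hadj, hy⟩)
      · by_cases hyv : y = v
        · subst hyv
          exact Or.inr ⟨⟨G.adj_symm hadj, hx⟩, rfl⟩
        · exact Or.inl ⟨hadj, Or.inr hx, fun h => (h.elim hyv hy)⟩
      · subst hx
        exact Or.inl ⟨hadj, Or.inl rfl, fun h => h.elim (fun h' => hadj.ne' h') hy⟩
  · rw [Finset.disjoint_left]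
    rintro ⟨x, y⟩ h h'
    simp only [Finset.mem_filter, Finset.mem_univ, true_and] at h
    simp only [Finset.mem_product, Finset.mem_singleton, Finset.mem_sdiff] at h'
    exact hv (h'.1 ▸ h.2.1)
  · rw [Finset.disjoint_left]
    rintro ⟨x, y⟩ h h'
    simp only [Finset.mem_filter, Finset.mem_univ, true_and] at h
    simp only [Finset.mem_product, Finset.mem_singleton, Finset.mem_inter] at h'
    exact h.2.2 (h'.2 ▸ Finset.mem_insert_self v S)

theorem edge_removal_criterion
    [Fintype V] [DecidableEq V] (G : SimpleGraph V) [DecidableRel G.Adj]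
    (u v : V) (huv : G.Adj u v)
    (n : ℕ) (hn : n = (G.neighborFinset u ∩ G.neighborFinset v).card)
    (hcrit : (⌈(n : ℚ) / 2⌉ : ℚ) + 1 > (max (G.degree u) (G.degree v) : ℚ) / 2) :
    ∀ S : Finset V, u ∈ S → v ∉ S →
      cutSize G (S.erase u) < cutSize G S ∨ cutSize G (insert v S) < cutSize G S := by
  classical
  intro S hu hv
  set a := (G.neighborFinset u \ S).card with ha
  set c := (G.neighborFinset u ∩ S).card with hc
  set b := (G.neighborFinset v ∩ S).card with hb
  set d := (G.neighborFinset v \ S).card with hd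
  have h1 := cut_erase G u S hu
  have h2 := cut_insert G v S hv
  have hdu : G.degree u = c + a := by
    rw [← SimpleGraph.card_neighborFinset_eq_degree, hc, ha,
      Finset.card_inter_add_card_sdiff]
  have hdv : G.degree v = b + d := by
    rw [← SimpleGraph.card_neighborFinset_eq_degree, hb, hd,
      Finset.card_inter_add_card_sdiff]
  set C := G.neighborFinset u ∩ G.neighborFinset v with hC
  set nu := (C.filter (· ∉ S)).card with hnu
  set nv := (C.filter (· ∈ S)).card with hnv
  have hnsum : nv + nu = n := by
    rw [hn, hnv, hnu]
    exact Finset.card_filter_add_card_filter_not (fun x => x ∈ S)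
  have hau : nu + 1 ≤ a := by
    have hsub : insert v (C.filter (· ∉ S)) ⊆ G.neighborFinset u \ S := by
      intro x hx
      rcases Finset.mem_insert.mp hx with hx | hx
      · subst hx
        exact Finset.mem_sdiff.mpr ⟨SimpleGraph.mem_neighborFinset _ _ _ |>.mpr huv, hv⟩
      · obtain ⟨hxC, hxS⟩ := Finset.mem_filter.mp hx
        exact Finset.mem_sdiff.mpr ⟨(Finset.mem_inter.mp hxC).1, hxS⟩
    have hvC : v ∉ C.filter (· ∉ S) := by
      intro h
      have := (Finset.mem_inter.mp (Finset.mem_filter.mp h).1).2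
      exact G.irrefl ((SimpleGraph.mem_neighborFinset _ _ _).mp this)
    calc nu + 1 = (insert v (C.filter (· ∉ S))).card := by
          rw [Finset.card_insert_of_notMem hvC]
      _ ≤ a := Finset.card_le_card hsub
  have hbv : nv + 1 ≤ b := by
    have hsub : insert u (C.filter (· ∈ S)) ⊆ G.neighborFinset v ∩ S := by
      intro x hx
      rcases Finset.mem_insert.mp hx with hx | hx
      · subst hx
        exact Finset.mem_inter.mpr ⟨SimpleGraph.mem_neighborFinset _ _ _ |>.mpr huv.symm, hu⟩
      · obtain ⟨hxC, hxS⟩ := Finset.mem_filter.mp hx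
        exact Finset.mem_inter.mpr ⟨(Finset.mem_inter.mp hxC).2, hxS⟩
    have huC : u ∉ C.filter (· ∈ S) := by
      intro h
      have := (Finset.mem_inter.mp (Finset.mem_filter.mp h).1).1
      exact G.irrefl ((SimpleGraph.mem_neighborFinset _ _ _).mp this)
    calc nv + 1 = (insert u (C.filter (· ∈ S))).card := by
          rw [Finset.card_insert_of_notMem huC]
      _ ≤ b := Finset.card_le_card hsub
  have key : ∀ m k dm : ℕ, n ≤ 2 * m → m + 1 ≤ k →
      (dm : ℚ) ≤ (max (G.degree u) (G.degree v) : ℚ) → dm < 2 * k := by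
    intro m k dm hm hk hdm
    have hq1 : (n : ℚ) / 2 ≤ ((m : ℤ) : ℚ) := by
      rw [div_le_iff₀ (by norm_num)]
      push_cast
      exact_mod_cast hm.trans_eq (Nat.mul_comm 2 m)
    have hq2 : ((⌈(n : ℚ) / 2⌉ : ℤ) : ℚ) ≤ (m : ℚ) := by
      exact_mod_cast Int.ceil_le.mpr hq1
    have : (dm : ℚ) < 2 * (k : ℚ) := by
      have hk' : (m : ℚ) + 1 ≤ (k : ℚ) := by exact_mod_cast hk
      nlinarith [hcrit]
    exact_mod_cast this
  have hcase : n ≤ 2 * nu ∨ n ≤ 2 * nv := by omega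
  rcases hcase with h | h
  · left
    have := key nu a (G.degree u) h hau (by exact_mod_cast le_max_left (G.degree u) (G.degree v))
    omega
  · right
    have := key nv b (G.degree v) h hbv (by exact_mod_cast le_max_right (G.degree u) (G.degree v))
    omega
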